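/- The element t^{-1}ξ_{1234} does not belong to the derived algebra K'(1,4) = [K(1,4),K(1,4)]; more precisely, K'(1,4) is the ℂ-linear span of {t^k ξ_I : I a strictly increasing sequence in {1,2,3,4}, I ≠ (1,2,3,4), k ∈ ℤ} ∪ {t^l ξ_{1234} : l ∈ ℤ, l ≠ −1}. -/

import Mathlib

/-!
The contact Lie superalgebra `K(1,4)` is identified with `Λ(1,4) = ℂ[t,t⁻¹] ⊗ Λ(4)`,
with basis the monomials `t^m ξ_I` (`m ∈ ℤ`, `I ⊆ {1,2,3,4}` increasing), and bracket
`[t^m ξ_I, t^n ξ_J] = (2n - 2m - n|I| + m|J|) t^{m+n-1} ξ_{IJ}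
   + (-1)^{|I|} t^{m+n} ∑ᵢ ∂ᵢξ_I ∂ᵢξ_J`.
-/

open Finset

noncomputable section

/-- Index set of a Grassmann monomial in `ξ₁,…,ξ₄` (0-indexed). -/
abbrev Idx : Type := Finset (Fin 4)

/-- Sign with which two Grassmann monomials multiply: `ξ_I ξ_J = msign I J • ξ_{I ∪ J}`
for `I, J` disjoint. -/
def msign (I J : Idx) : ℤ := (-1 : ℤ) ^ ((I ×ˢ J).filter (fun p => p.2 < p.1)).card

/-- Sign of `∂ᵢ ξ_I` (for `i ∈ I`): `∂ᵢ ξ_I = dsign i I • ξ_{I \ {i}}`. -/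
def dsign (i : Fin 4) (I : Idx) : ℤ := (-1 : ℤ) ^ (I.filter (fun j => j < i)).card

/-- `K(1,4) = Λ(1,4) = ℂ[t,t⁻¹] ⊗ Λ(4)`, with basis `t^m ξ_I`. -/
abbrev K14 : Type := (ℤ × Idx) →₀ ℂ

/-- The basis monomial `t^m ξ_I` of `K(1,4)`. -/
def bas (m : ℤ) (I : Idx) : K14 := Finsupp.single (m, I) 1

/-- `t^m ξ_I ξ_J` (zero if `I, J` are not disjoint). -/
def xiMul (m : ℤ) (I J : Idx) : K14 :=
  if Disjoint I J then ((msign I J : ℤ) : ℂ) • bas m (I ∪ J) else 0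

/-- `t^m ∑ᵢ ∂ᵢξ_I ∂ᵢξ_J`. -/
def ddMul (m : ℤ) (I J : Idx) : K14 :=
  ∑ i : Fin 4,
    if i ∈ I ∧ i ∈ J then
      ((dsign i I * dsign i J : ℤ) : ℂ) • xiMul m (I.erase i) (J.erase i)
    else 0

/-- The contact bracket `[t^m ξ_I, t^n ξ_J]` of `K(1,4)`. -/
def kbrk (m : ℤ) (I : Idx) (n : ℤ) (J : Idx) : K14 :=
  ((2 * n - 2 * m - n * (I.card : ℤ) + m * (J.card : ℤ) : ℤ) : ℂ) • xiMul (m + n - 1) I J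
  + ((-1 : ℂ) ^ I.card) • ddMul (m + n) I J

lemma xiMul_apply_top (m : ℤ) (I J : Idx) (h : m ≠ -1 ∨ I ∪ J ≠ Finset.univ) :
    xiMul m I J (-1, Finset.univ) = 0 := by
  unfold xiMul bas
  split_ifs with hd
  · rw [Finsupp.smul_apply, Finsupp.single_apply, if_neg, smul_zero]
    simp only [Prod.mk.injEq, not_and_or]
    exact h
  · rfl

lemma ddMul_apply_top (m : ℤ) (I J : Idx) : ddMul m I J (-1, Finset.univ) = 0 := by
  unfold ddMul
  rw [Finsupp.finset_sum_apply]
  refine Finset.sum_eq_zero fun i _ => ?_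
  split_ifs with h
  · rw [Finsupp.smul_apply, xiMul_apply_top, smul_zero]
    refine Or.inr fun hu => absurd (hu ▸ Finset.mem_univ i :
      i ∈ I.erase i ∪ J.erase i) (by simp)
  · rfl

lemma kbrk_apply_top (m n : ℤ) (I J : Idx) : kbrk m I n J (-1, Finset.univ) = 0 := by
  unfold kbrk
  rw [Finsupp.add_apply, Finsupp.smul_apply, Finsupp.smul_apply, ddMul_apply_top, smul_zero,
    add_zero]
  by_cases hu : I ∪ J = Finset.univ
  · by_cases hm : m + n - 1 = -1
    · by_cases hd : Disjoint I J
      · have hc : (I.card : ℤ) + J.card = 4 := by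
          have := Finset.card_union_of_disjoint hd
          rw [hu] at this
          simp only [Finset.card_univ, Fintype.card_fin] at this
          exact_mod_cast this.symm
        have : (2 * n - 2 * m - n * (I.card : ℤ) + m * (J.card : ℤ)) = 0 := by
          have hn : n = -m := by omega
          subst hn; linear_combination m * hc
        rw [this]
        simp
      · unfold xiMul; rw [if_neg hd]; simp
    · rw [xiMul_apply_top _ _ _ (Or.inl hm)]; simp
  · rw [xiMul_apply_top _ _ _ (Or.inr hu)]; simp

lemma single_eq_smul_bas (p : ℤ × Idx) (c : ℂ) :
    (Finsupp.single p c : K14) = c • bas p.1 p.2 := by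
  rw [bas, Finsupp.smul_single, smul_eq_mul, mul_one]

lemma brk_apply_zero (B : K14 →ₗ[ℂ] K14 →ₗ[ℂ] K14)
    (hB : ∀ (m n : ℤ) (I J : Idx), B (bas m I) (bas n J) = kbrk m I n J)
    (x y : K14) : B x y (-1, Finset.univ) = 0 := by
  induction x using Finsupp.induction_linear with
  | zero => simp
  | add a b ha hb => simp [map_add, Finsupp.add_apply, ha, hb]
  | single p c =>
    induction y using Finsupp.induction_linear with
    | zero => simp
    | add a b ha hb => simp [map_add, Finsupp.add_apply, ha, hb]
    | single q d =>
      rw [single_eq_smul_bas p c, single_eq_smul_bas q d]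
      simp [hB, kbrk_apply_top]

lemma kbrk_empty (m n : ℤ) (I : Idx) :
    kbrk m I n ∅ = ((2 * n - 2 * m - n * (I.card : ℤ) : ℤ) : ℂ) • bas (m + n - 1) I := by
  unfold kbrk ddMul xiMul
  rw [if_pos (Finset.disjoint_empty_right I)]
  simp [msign, Finset.product_empty]

lemma bas_mem_span (B : K14 →ₗ[ℂ] K14 →ₗ[ℂ] K14)
    (hB : ∀ (m n : ℤ) (I J : Idx), B (bas m I) (bas n J) = kbrk m I n J)
    (k : ℤ) (I : Idx) (h : ¬(k = -1 ∧ I = Finset.univ)) :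
    bas k I ∈ Submodule.span ℂ {z : K14 | ∃ x y : K14, z = B x y} := by
  obtain ⟨m, n, hmn, hc⟩ : ∃ m n : ℤ, m + n - 1 = k ∧
      (2 * n - 2 * m - n * (I.card : ℤ)) ≠ 0 := by
    by_cases h2 : I.card = 2
    · exact ⟨1, k, by ring, by rw [h2]; push_cast; intro h0; omega⟩
    · by_cases hk : k = -1
      · refine ⟨1, -1, by omega, ?_⟩
        have hne : I ≠ Finset.univ := fun hI => h ⟨hk, hI⟩
        have hlt : I.card < 4 := by
          have := Finset.card_lt_card (Finset.ssubset_univ_iff.2 hne)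
          simpa using this
        have hlt' : (I.card : ℤ) < 4 := by exact_mod_cast hlt
        intro h0; omega
      · refine ⟨0, k + 1, by ring, ?_⟩
        have h2' : (I.card : ℤ) ≠ 2 := by exact_mod_cast h2
        have hk' : k + 1 ≠ 0 := by omega
        have : 2 * (k + 1) - 2 * 0 - (k + 1) * (I.card : ℤ)
            = (k + 1) * (2 - (I.card : ℤ)) := by ring
        rw [this]
        exact mul_ne_zero hk' (by omega)
  have hb : bas k I
      = (((2 * n - 2 * m - n * (I.card : ℤ) : ℤ) : ℂ))⁻¹ • B (bas m I) (bas n ∅) := by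
    rw [hB, kbrk_empty, hmn, smul_smul, inv_mul_cancel₀, one_smul]
    exact_mod_cast hc
  rw [hb]
  exact Submodule.smul_mem _ _ (Submodule.subset_span ⟨_, _, rfl⟩)
/-- **The element `t⁻¹ ξ₁₂₃₄` does not belong to `K'(1,4) = [K(1,4), K(1,4)]`**
(Proposition 3.4).  More precisely, the derived algebra `K'(1,4)` (the linear span of all
brackets) is the ℂ-linear span of
`{t^k ξ_I : I ≠ (1,2,3,4), k ∈ ℤ} ∪ {t^l ξ₁₂₃₄ : l ∈ ℤ, l ≠ -1}`. -/
theorem derived_K14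
    (B : K14 →ₗ[ℂ] K14 →ₗ[ℂ] K14)
    (hB : ∀ (m n : ℤ) (I J : Idx), B (bas m I) (bas n J) = kbrk m I n J) :
    bas (-1) Finset.univ ∉ Submodule.span ℂ {z : K14 | ∃ x y : K14, z = B x y} ∧
    Submodule.span ℂ {z : K14 | ∃ x y : K14, z = B x y}
      = Submodule.span ℂ
          ({z : K14 | ∃ (k : ℤ) (I : Idx), I ≠ Finset.univ ∧ z = bas k I}
            ∪ {z : K14 | ∃ l : ℤ, l ≠ -1 ∧ z = bas l Finset.univ}) := by
  have hker : Submodule.span ℂ {z : K14 | ∃ x y : K14, z = B x y}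
      ≤ LinearMap.ker (Finsupp.lapply (-1, Finset.univ) : K14 →ₗ[ℂ] ℂ) := by
    rw [Submodule.span_le]
    rintro z ⟨x, y, rfl⟩
    exact brk_apply_zero B hB x y
  have hspan2 : ∀ z : K14, z (-1, Finset.univ) = 0 →
      z ∈ Submodule.span ℂ
          ({z : K14 | ∃ (k : ℤ) (I : Idx), I ≠ Finset.univ ∧ z = bas k I}
            ∪ {z : K14 | ∃ l : ℤ, l ≠ -1 ∧ z = bas l Finset.univ}) := by
    intro z hz
    have hz' : z = ∑ p ∈ z.support, Finsupp.single p (z p) := (Finsupp.sum_single z).symm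
    rw [hz']
    refine Submodule.sum_mem _ fun p hp => ?_
    have hpne : p ≠ (-1, Finset.univ) := by
      rintro rfl
      exact Finsupp.mem_support_iff.1 hp hz
    rw [single_eq_smul_bas]
    refine Submodule.smul_mem _ _ (Submodule.subset_span ?_)
    by_cases hu : p.2 = Finset.univ
    · refine Or.inr ⟨p.1, ?_, by rw [hu]⟩
      intro h1
      exact hpne (Prod.ext h1 hu)
    · exact Or.inl ⟨p.1, p.2, hu, rfl⟩
  constructor
  · intro hmem
    have h0 := hker hmem
    rw [LinearMap.mem_ker, Finsupp.lapply_apply, bas, Finsupp.single_apply, if_pos rfl] at h0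
    exact one_ne_zero h0
  · refine le_antisymm (fun z hz => ?_) (Submodule.span_le.2 ?_)
    · exact hspan2 z (hker hz)
    · rintro z (⟨k, I, hI, rfl⟩ | ⟨l, hl, rfl⟩)
      · exact bas_mem_span B hB k I fun h => hI h.2
      · exact bas_mem_span B hB l _ fun h => hl h.1

end
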